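/- Let P be a Borel probability measure on ℝ^n, T : ℝ^n → (ℝ^D)^Q Borel measurable with coordinates T^q, e : Fin K → ℝ^D a codebook, and π^1, …, π^Q probability vectors on Fin K with P_{e,π^q} = ∑_k π^q_k δ_{e k}. Suppose that for each q there exists a coupling μ^q of T^q#P and P_{e,π^q} attaining W_{dist}(T^q#P, P_{e,π^q}), where dist is the Euclidean distance on ℝ^D. Then there exist a Borel probability measure γ* on (ℝ^D)^Q, supported on codeword tuples {e k : k ∈ Fin K}^Q and with q-th coordinate marginal P_{e,π^q} for every q, and a coupling μ of T#P and γ* such that ∫ f_dz dμ = (1/Q) ∑_{q=1}^{Q} W_{dist}(T^q#P, P_{e,π^q}), where f_dz(z, z') = (1/Q) ∑_q ‖z^q − z'^q‖; consequently W_{f_dz}(T#P, γ*) ≤ (1/Q) ∑_q W_{dist}(T^q#P, P_{e,π^q}). -/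

import Mathlib

open MeasureTheory ProbabilityTheory ENNReal Set

/-- Kantorovich cost `W_c(μ, ν)`: the infimum of `∫ c(x, y) dπ(x, y)` over all
probability measures `π` on the product whose first marginal is `μ` and whose
second marginal is `ν`. -/
noncomputable def Wcost {X Y : Type*} [MeasurableSpace X] [MeasurableSpace Y]
    (c : X → Y → ℝ≥0∞) (μ : Measure X) (ν : Measure Y) : ℝ≥0∞ :=
  ⨅ (π : Measure (X × Y)) (_ : IsProbabilityMeasure π)
    (_ : π.fst = μ) (_ : π.snd = ν), ∫⁻ p, c p.1 p.2 ∂π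

/-- The discrete codebook measure `P_{e,π} = ∑ k, π k • δ_{e k}` on `ℝ^D`. -/
noncomputable def codebookMeasure {K D : ℕ} (e : Fin K → EuclideanSpace ℝ (Fin D))
    (w : Fin K → ℝ) : Measure (EuclideanSpace ℝ (Fin D)) :=
  ∑ k, (ENNReal.ofReal (w k)) • Measure.dirac (e k)

/-- The latent cost `f_dz(z, z') = (1/Q) ∑ q, ‖z q − z' q‖` on `(ℝ^D)^Q`,
valued in `ℝ≥0∞`. -/
noncomputable def fdz {Q D : ℕ} (z z' : Fin Q → EuclideanSpace ℝ (Fin D)) : ℝ≥0∞ :=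
  (∑ q, ENNReal.ofReal ‖z q - z' q‖) / (Q : ℝ≥0∞)

section piKernel
variable {ι : Type*} [Fintype ι] {X Y : Type*} [MeasurableSpace X] [MeasurableSpace Y]

lemma pi_eval_preimage {Z : ι → Type*} [∀ i, MeasurableSpace (Z i)]
    (μ : ∀ i, Measure (Z i)) [∀ i, IsProbabilityMeasure (μ i)] (i : ι)
    {B : Set (Z i)} (hB : MeasurableSet B) :
    Measure.pi μ ((fun z => z i) ⁻¹' B) = μ i B := by
  classical
  have h : (fun z : ∀ j, Z j => z i) ⁻¹' B
      = Set.pi Set.univ (Function.update (fun j => (univ : Set (Z j))) i B) := by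
    rw [Set.eval_preimage]
  rw [h, Measure.pi_pi]
  rw [Finset.prod_eq_single i]
  · simp
  · intro j _ hj
    simp [Function.update_of_ne hj]
  · simp

noncomputable def piKernel (κ : ι → Kernel X Y) [∀ i, IsMarkovKernel (κ i)] :
    Kernel (ι → X) (ι → Y) where
  toFun := fun z => Measure.pi (fun i => κ i (z i))
  measurable' := by
    rw [Measure.measurable_measure]
    refine MeasurableSpace.induction_on_inter
      (C := fun s _ => Measurable fun z : ι → X => Measure.pi (fun i => κ i (z i)) s)
      generateFrom_pi.symm isPiSystem_pi (by simp) ?_ ?_ ?_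
    · rintro _ ⟨t, ht, rfl⟩
      simp only [Set.mem_univ_pi, Set.mem_setOf_eq] at ht
      have : (fun z : ι → X => Measure.pi (fun i => κ i (z i)) (Set.pi Set.univ t))
          = fun z : ι → X => ∏ i, κ i (z i) (t i) := by
        ext z; exact Measure.pi_pi _ _
      rw [this]
      exact Finset.measurable_prod _ fun i _ =>
        (Kernel.measurable_coe (κ i) (ht i)).comp (measurable_pi_apply i)
    · intro s hs ih
      have : (fun z : ι → X => Measure.pi (fun i => κ i (z i)) sᶜ)
          = fun z : ι → X => 1 - Measure.pi (fun i => κ i (z i)) s := by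
        ext z
        have : IsProbabilityMeasure (Measure.pi (fun i => κ i (z i))) := by infer_instance
        rw [measure_compl hs (measure_ne_top _ _), measure_univ]
      rw [this]
      exact Measurable.const_sub ih 1
    · intro f hd hf ih
      have : (fun z : ι → X => Measure.pi (fun i => κ i (z i)) (⋃ n, f n))
          = fun z : ι → X => ∑' n, Measure.pi (fun i => κ i (z i)) (f n) := by
        ext z; exact measure_iUnion hd hf
      rw [this]
      exact Measurable.ennreal_tsum ih

@[simp] lemma piKernel_apply (κ : ι → Kernel X Y) [∀ i, IsMarkovKernel (κ i)] (z : ι → X) :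
    piKernel κ z = Measure.pi (fun i => κ i (z i)) := rfl

instance (κ : ι → Kernel X Y) [∀ i, IsMarkovKernel (κ i)] : IsMarkovKernel (piKernel κ) :=
  ⟨fun z => by rw [piKernel_apply]; infer_instance⟩

lemma map_compProd_piKernel (μ : Measure (ι → X)) [IsProbabilityMeasure μ]
    (κ : ι → Kernel X Y) [∀ i, IsMarkovKernel (κ i)] (i : ι) :
    (μ ⊗ₘ piKernel κ).map (fun p => (p.1 i, p.2 i))
      = (μ.map (fun z => z i)) ⊗ₘ (κ i) := by
  have hm : Measurable (fun p : (ι → X) × (ι → Y) => (p.1 i, p.2 i)) :=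
    ((measurable_pi_apply i).comp measurable_fst).prodMk
      ((measurable_pi_apply i).comp measurable_snd)
  have hev : Measurable (fun z : ι → X => z i) := measurable_pi_apply i
  have hev' : Measurable (fun z : ι → Y => z i) := measurable_pi_apply i
  refine ext_of_generate_finite _ generateFrom_prod.symm isPiSystem_prod ?_ ?_
  · rintro _ ⟨A, hA, B, hB, rfl⟩
    simp only [Set.mem_setOf_eq] at hA hB
    rw [Measure.map_apply hm (hA.prod hB)]
    have hpre : (fun p : (ι → X) × (ι → Y) => (p.1 i, p.2 i)) ⁻¹' (A ×ˢ B)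
        = ((fun z => z i) ⁻¹' A) ×ˢ ((fun z => z i) ⁻¹' B) := rfl
    rw [hpre, Measure.compProd_apply_prod (hev hA) (hev' hB),
      Measure.compProd_apply_prod hA hB,
      setLIntegral_map hA (Kernel.measurable_coe (κ i) hB) hev]
    refine setLIntegral_congr_fun_ae (hev hA) (Filter.Eventually.of_forall fun z _ => ?_)
    rw [piKernel_apply, pi_eval_preimage _ i hB]
  · have : IsProbabilityMeasure (μ.map (fun z => z i)) :=
      Measure.isProbabilityMeasure_map hev.aemeasurable
    rw [Measure.map_apply hm MeasurableSet.univ]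
    simp [Measure.compProd_apply_univ]

end piKernel

/-- **Eq. (65), the constructive step in the proof of Lemma 2**: if for each `q` there
is a coupling `μ^q` of `T^q#P` and `P_{e,π^q}` attaining `W_dist(T^q#P, P_{e,π^q})`, then
there exist a probability measure `γ*` on `(ℝ^D)^Q` supported on codeword tuples with
`q`-th coordinate marginal `P_{e,π^q}` for every `q`, and a coupling `μ` of `T#P` and
`γ*`, such that `∫ f_dz dμ = (1/Q) ∑ q, W_dist(T^q#P, P_{e,π^q})`; consequently
`W_{f_dz}(T#P, γ*) ≤ (1/Q) ∑ q, W_dist(T^q#P, P_{e,π^q})`. -/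
theorem stmt7 {K Q D n : ℕ}
    (P : Measure (EuclideanSpace ℝ (Fin n))) [IsProbabilityMeasure P]
    (T : EuclideanSpace ℝ (Fin n) → (Fin Q → EuclideanSpace ℝ (Fin D)))
    (hT : Measurable T)
    (e : Fin K → EuclideanSpace ℝ (Fin D)) (w : Fin Q → Fin K → ℝ)
    (hw0 : ∀ q k, 0 ≤ w q k) (hw1 : ∀ q, ∑ k, w q k = 1)
    (hopt : ∀ q, ∃ μq : Measure (EuclideanSpace ℝ (Fin D) × EuclideanSpace ℝ (Fin D)),
      IsProbabilityMeasure μq ∧ μq.fst = P.map (fun x => T x q) ∧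
      μq.snd = codebookMeasure e (w q) ∧
      (∫⁻ p, edist p.1 p.2 ∂μq)
        = Wcost (fun a b => edist a b) (P.map (fun x => T x q)) (codebookMeasure e (w q))) :
    ∃ (γstar : Measure (Fin Q → EuclideanSpace ℝ (Fin D)))
      (μ : Measure ((Fin Q → EuclideanSpace ℝ (Fin D)) × (Fin Q → EuclideanSpace ℝ (Fin D)))),
      IsProbabilityMeasure γstar ∧
      γstar {z | ∀ q, ∃ k, z q = e k} = 1 ∧
      (∀ q, γstar.map (fun z => z q) = codebookMeasure e (w q)) ∧
      IsProbabilityMeasure μ ∧ μ.fst = P.map T ∧ μ.snd = γstar ∧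
      (∫⁻ p, fdz p.1 p.2 ∂μ)
        = (∑ q, Wcost (fun a b => edist a b)
            (P.map (fun x => T x q)) (codebookMeasure e (w q))) / (Q : ℝ≥0∞) ∧
      Wcost fdz (P.map T) γstar
        ≤ (∑ q, Wcost (fun a b => edist a b)
            (P.map (fun x => T x q)) (codebookMeasure e (w q))) / (Q : ℝ≥0∞) := by
  classical
  choose μq hprob hfst hsnd hW using hopt
  haveI : ∀ q, IsProbabilityMeasure (μq q) := hprob
  set base := P.map T with hbase
  haveI : IsProbabilityMeasure base := Measure.isProbabilityMeasure_map hT.aemeasurable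
  set κ : Fin Q → Kernel (EuclideanSpace ℝ (Fin D)) (EuclideanSpace ℝ (Fin D)) := fun q => (μq q).condKernel with hκ
  set μ := base ⊗ₘ piKernel κ with hμ
  set γstar := μ.snd with hγ
  have hev : ∀ q, Measurable fun z : Fin Q → (EuclideanSpace ℝ (Fin D)) => z q := fun q => measurable_pi_apply q
  have hpair : ∀ q, Measurable (fun p : (Fin Q → (EuclideanSpace ℝ (Fin D))) × (Fin Q → (EuclideanSpace ℝ (Fin D))) => (p.1 q, p.2 q)) :=
    fun q => ((hev q).comp measurable_fst).prodMk ((hev q).comp measurable_snd)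
  -- the key identity
  have hmapq : ∀ q, μ.map (fun p => (p.1 q, p.2 q)) = μq q := by
    intro q
    rw [hμ, map_compProd_piKernel]
    have h1 : base.map (fun z => z q) = (μq q).fst := by
      rw [hbase, Measure.map_map (hev q) hT]
      exact (hfst q).symm
    rw [h1, hκ]
    exact (μq q).disintegrate (μq q).condKernel
  haveI : IsProbabilityMeasure μ := by rw [hμ]; infer_instance
  haveI : IsProbabilityMeasure γstar := by
    rw [hγ]; exact Measure.isProbabilityMeasure_map measurable_snd.aemeasurable
  -- coordinate marginals of γstar
  have hγq : ∀ q, γstar.map (fun z => z q) = codebookMeasure e (w q) := by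
    intro q
    have h2 : γstar.map (fun z => z q) = (μ.map (fun p => (p.1 q, p.2 q))).snd := by
      rw [hγ, Measure.snd, Measure.snd, Measure.map_map (hev q) measurable_snd,
        Measure.map_map measurable_snd (hpair q)]
      rfl
    rw [h2, hmapq q, hsnd q]
  -- support of γstar
  have hEcode : MeasurableSet {y : (EuclideanSpace ℝ (Fin D)) | ∃ k, y = e k} := by
    have : {y : (EuclideanSpace ℝ (Fin D)) | ∃ k, y = e k} = ⋃ k, {e k} := by
      ext y; simp [eq_comm]
    rw [this]
    exact MeasurableSet.iUnion fun k => measurableSet_singleton _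
  have hS : MeasurableSet {z : Fin Q → (EuclideanSpace ℝ (Fin D)) | ∀ q, ∃ k, z q = e k} := by
    have : {z : Fin Q → (EuclideanSpace ℝ (Fin D)) | ∀ q, ∃ k, z q = e k}
        = ⋂ q, (fun z : Fin Q → (EuclideanSpace ℝ (Fin D)) => z q) ⁻¹' {y | ∃ k, y = e k} := by
      ext z; simp [Set.mem_iInter]
    rw [this]
    exact MeasurableSet.iInter fun q => (hev q) hEcode
  have hsupp : γstar {z | ∀ q, ∃ k, z q = e k} = 1 := by
    rw [← prob_compl_eq_zero_iff hS]
    have hsub : {z : Fin Q → (EuclideanSpace ℝ (Fin D)) | ∀ q, ∃ k, z q = e k}ᶜ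
        ⊆ ⋃ q, (fun z : Fin Q → (EuclideanSpace ℝ (Fin D)) => z q) ⁻¹' {y | ∃ k, y = e k}ᶜ := by
      intro z hz
      simp only [Set.mem_compl_iff, Set.mem_setOf_eq, not_forall] at hz
      obtain ⟨q, hq⟩ := hz
      exact Set.mem_iUnion.2 ⟨q, hq⟩
    refine measure_mono_null hsub (measure_iUnion_null fun q => ?_)
    have : γstar ((fun z : Fin Q → (EuclideanSpace ℝ (Fin D)) => z q) ⁻¹' {y | ∃ k, y = e k}ᶜ)
        = (γstar.map (fun z => z q)) {y | ∃ k, y = e k}ᶜ := by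
      rw [Measure.map_apply (hev q) hEcode.compl]
    rw [this, hγq q, codebookMeasure]
    rw [Measure.finset_sum_apply]
    refine Finset.sum_eq_zero fun k _ => ?_
    rw [Measure.smul_apply, Measure.dirac_apply' _ hEcode.compl]
    simp [Set.indicator_of_notMem, Set.mem_setOf_eq]
  -- the integral identity
  have hedist : Measurable fun r : (EuclideanSpace ℝ (Fin D)) × (EuclideanSpace ℝ (Fin D)) => edist r.1 r.2 := measurable_edist
  have hterm : ∀ q, (∫⁻ p : (Fin Q → (EuclideanSpace ℝ (Fin D))) × (Fin Q → (EuclideanSpace ℝ (Fin D))), ENNReal.ofReal ‖p.1 q - p.2 q‖ ∂μ)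
      = Wcost (fun a b => edist a b) (P.map (fun x => T x q)) (codebookMeasure e (w q)) := by
    intro q
    have h3 : (fun p : (Fin Q → (EuclideanSpace ℝ (Fin D))) × (Fin Q → (EuclideanSpace ℝ (Fin D))) => ENNReal.ofReal ‖p.1 q - p.2 q‖)
        = fun p => edist (p.1 q) (p.2 q) := by
      ext p; rw [edist_dist, dist_eq_norm]
    rw [h3, ← hW q, ← hmapq q, lintegral_map hedist (hpair q)]
  have hmeasq : ∀ q, Measurable (fun p : (Fin Q → (EuclideanSpace ℝ (Fin D))) × (Fin Q → (EuclideanSpace ℝ (Fin D))) =>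
      ENNReal.ofReal ‖p.1 q - p.2 q‖) := by
    intro q
    apply Measurable.ennreal_ofReal
    exact (((hev q).comp measurable_fst).sub ((hev q).comp measurable_snd)).norm
  have hint : (∫⁻ p, fdz p.1 p.2 ∂μ)
      = (∑ q, Wcost (fun a b => edist a b)
          (P.map (fun x => T x q)) (codebookMeasure e (w q))) / (Q : ℝ≥0∞) := by
    have h4 : (fun p : (Fin Q → (EuclideanSpace ℝ (Fin D))) × (Fin Q → (EuclideanSpace ℝ (Fin D))) => fdz p.1 p.2)
        = fun p => (Q : ℝ≥0∞)⁻¹ * ∑ q, ENNReal.ofReal ‖p.1 q - p.2 q‖ := by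
      ext p; rw [fdz, div_eq_mul_inv, mul_comm]
    rw [h4, lintegral_const_mul _ (Finset.measurable_sum _ fun q _ => hmeasq q),
      lintegral_finset_sum _ fun q _ => hmeasq q]
    simp_rw [hterm]
    rw [div_eq_mul_inv, mul_comm]
  refine ⟨γstar, μ, inferInstance, hsupp, hγq, inferInstance, ?_, rfl, hint, ?_⟩
  · rw [hμ, Measure.fst_compProd]
  · rw [← hint]
    exact iInf_le_of_le μ (iInf_le_of_le inferInstance (iInf_le_of_le
      (by rw [hμ, Measure.fst_compProd]) (iInf_le_of_le rfl le_rfl)))
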